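/- Let m ≤ n be positive integers and let W be a real m×n matrix with W Wᵀ = I_m and 1_mᵀ W 1_n = √(mn). Then there exist a real m×m orthogonal matrix U whose first column equals ξ_m = (1/√m)1_m and a real n×m matrix V with orthonormal columns (VᵀV = I_m) whose first column equals ξ_n = (1/√n)1_n, such that W = U Vᵀ. -/

import Mathlib

open Matrix Finset

/-- Every semi-orthogonal `m × n` real matrix `W` (`W * Wᵀ = 1`) whose
entry sum equals `√(m*n)` can be written as `W = U * Vᵀ` where `U` is an `m × m`
orthogonal matrix with first column `ξₘ` and `V` is an `n × m` matrix with orthonormal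
columns whose first column is `ξₙ`. -/
theorem optimal_eq_mul_transpose
    (m n : ℕ) (hm : 0 < m) (hmn : m ≤ n)
    (W : Matrix (Fin m) (Fin n) ℝ)
    (hW : W * Wᵀ = 1)
    (hsum : ∑ i : Fin m, ∑ j : Fin n, W i j = Real.sqrt ((m : ℝ) * n)) :
    ∃ (U : Matrix (Fin m) (Fin m) ℝ) (V : Matrix (Fin n) (Fin m) ℝ),
      Uᵀ * U = 1 ∧
      (∀ i : Fin m, U i ⟨0, hm⟩ = 1 / Real.sqrt m) ∧
      Vᵀ * V = 1 ∧
      (∀ i : Fin n, V i ⟨0, hm⟩ = 1 / Real.sqrt n) ∧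
      W = U * Vᵀ := by
  have hn : 0 < n := lt_of_lt_of_le hm hmn
  have hm0 : (0:ℝ) < m := by exact_mod_cast hm
  have hn0 : (0:ℝ) < n := by exact_mod_cast hn
  have hsm : Real.sqrt m ≠ 0 := by positivity
  have hsn : Real.sqrt n ≠ 0 := by positivity
  set c : Fin n → ℝ := fun j => ∑ i, W i j with hc
  have hcs : ∑ j, c j = Real.sqrt m * Real.sqrt n := by
    rw [hc]
    rw [← Real.sqrt_mul hm0.le, ← hsum]
    exact Finset.sum_comm
  have hsq : ∑ j, (c j)^2 = (m:ℝ) := by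
    have h1 : ∀ j, (c j)^2 = ∑ i, ∑ k, W i j * W k j := by
      intro j
      rw [sq, hc, Finset.sum_mul_sum]
    calc ∑ j, (c j)^2 = ∑ j, ∑ i, ∑ k, W i j * W k j := by simp_rw [h1]
      _ = ∑ i, ∑ k, ∑ j, W i j * W k j := by rw [Finset.sum_comm]; congr 1; ext i; rw [Finset.sum_comm]
      _ = ∑ i, ∑ k, (W * Wᵀ) i k := by simp [Matrix.mul_apply]
      _ = (m:ℝ) := by rw [hW]; simp [Matrix.one_apply]
  set a : ℝ := Real.sqrt m / Real.sqrt n with ha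
  have ha2 : a^2 = m / n := by
    rw [ha, div_pow, Real.sq_sqrt hm0.le, Real.sq_sqrt hn0.le]
  have hzero : ∑ j, (c j - a)^2 = 0 := by
    have : ∀ j, (c j - a)^2 = (c j)^2 - 2*a*(c j) + a^2 := by intro j; ring
    simp_rw [this, Finset.sum_add_distrib, Finset.sum_sub_distrib, hsq, ← Finset.mul_sum, hcs,
      Finset.sum_const, Finset.card_univ, Fintype.card_fin, nsmul_eq_mul, ha2]
    rw [ha]
    field_simp
    linear_combination (-2) * Real.mul_self_sqrt hm0.le
  have hca : ∀ j, c j = a := by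
    intro j
    have := (Finset.sum_eq_zero_iff_of_nonneg (fun j _ => sq_nonneg (c j - a))).mp hzero j (Finset.mem_univ j)
    have := pow_eq_zero_iff (n := 2) (by norm_num) |>.mp this
    linarith
  -- orthonormal basis
  set z : Fin m := ⟨0, hm⟩ with hz
  have hcard : Module.finrank ℝ (EuclideanSpace ℝ (Fin m)) = Fintype.card (Fin m) := by simp
  set v : Fin m → EuclideanSpace ℝ (Fin m) := fun _ => WithLp.toLp 2 (fun _ => 1 / Real.sqrt m) with hv
  have hvo : Orthonormal ℝ (({z} : Set (Fin m)).restrict v) := by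
    rw [orthonormal_iff_ite]
    intro i j
    have : i = j := Subsingleton.elim i j
    subst this
    simp only [if_pos rfl, Set.restrict_apply]
    rw [hv]
    simp only [PiLp.inner_apply, Set.restrict_apply, WithLp.ofLp_toLp, ite_true, RCLike.inner_apply, conj_trivial]
    change ∑ _x : Fin m, (1 / Real.sqrt m) * (1 / Real.sqrt m) = 1
    rw [Finset.sum_const, Finset.card_univ, Fintype.card_fin, nsmul_eq_mul]
    rw [div_mul_div_comm, one_mul, Real.mul_self_sqrt hm0.le]
    field_simp
  obtain ⟨b, hb⟩ := Orthonormal.exists_orthonormalBasis_extension_of_card_eq (𝕜 := ℝ) hcard hvo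
  have hbz : ∀ i, b z i = 1 / Real.sqrt m := by
    intro i
    rw [hb z (Set.mem_singleton z)]
  set U : Matrix (Fin m) (Fin m) ℝ := fun i j => b j i with hU
  have hUU : Uᵀ * U = 1 := by
    ext j k
    simp only [Matrix.mul_apply, Matrix.transpose_apply, hU, Matrix.one_apply]
    have := (orthonormal_iff_ite.mp b.orthonormal) j k
    simp only [PiLp.inner_apply, RCLike.inner_apply, conj_trivial] at this
    rw [← this]
    exact (Finset.sum_congr rfl fun x _ => mul_comm _ _ : ∑ x, (b j) x * (b k) x = _)
  have hUU' : U * Uᵀ = 1 := mul_eq_one_comm.mp hUU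
  refine ⟨U, Wᵀ * U, hUU, ?_, ?_, ?_, ?_⟩
  · intro i
    simp only [hU, ← hz]
    exact hbz i
  · rw [Matrix.transpose_mul, Matrix.transpose_transpose, Matrix.mul_assoc,
      ← Matrix.mul_assoc W, hW, Matrix.one_mul, hUU]
  · intro i
    simp only [Matrix.mul_apply, Matrix.transpose_apply, ← hz]
    have : ∀ k, U k z = 1 / Real.sqrt m := fun k => hbz k
    simp_rw [this, ← Finset.sum_mul]
    rw [show ∑ k, W k i = c i from rfl, hca i, ha]
    field_simp
  · rw [Matrix.transpose_mul, Matrix.transpose_transpose, ← Matrix.mul_assoc, hUU',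
      Matrix.one_mul]
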